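/- Let A be a parity tree automaton accepting a tree t, with accepting computation φ. Suppose there is an infinite antichain Â of nodes, a state q, and two distinct accepting computations φ1 ≠ φ2 of A_q on a tree t_amb, such that φ(u) = q for all u ∈ Â. Let t̂ be obtained from t by grafting t_amb at every node of Â, and φ̂ obtained from φ by grafting φ1 at every node of Â. Then for every subset A' ⊆ Â, the computation obtained from φ̂ by grafting φ2 instead of φ1 at the nodes of A' is an accepting computation of A on t̂, and distinct subsets A' yield distinct computations. Consequently A has at least 2^{ℵ0} accepting computations on t̂. -/

import Mathlib

/-- A parity tree automaton over state set `Q` and alphabet `Γ`. -/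
structure PTA (Q Γ : Type*) where
  init : Set Q
  delta : Set (Q × Γ × Q × Q)
  color : Q → ℕ

variable {Q Γ : Type*}

/-- `φ` is a computation of `A` on the tree `t`. -/
def IsComputation (A : PTA Q Γ) (t : List Bool → Γ) (φ : List Bool → Q) : Prop :=
  φ [] ∈ A.init ∧ ∀ v : List Bool, (φ v, t v, φ (v ++ [false]), φ (v ++ [true])) ∈ A.delta

/-- The node at depth `i` along the infinite branch determined by `d`. -/
def branchNode (d : ℕ → Bool) (i : ℕ) : List Bool :=
  List.ofFn (fun j : Fin i => d j)

/-- `c` occurs infinitely often in the sequence `f`. -/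
def InfOften (f : ℕ → ℕ) (c : ℕ) : Prop := ∀ N : ℕ, ∃ i, N ≤ i ∧ f i = c

/-- The parity condition: the maximal value occurring infinitely often is even. -/
def ParityAccept (f : ℕ → ℕ) : Prop :=
  ∃ c, Even c ∧ InfOften f c ∧ ∀ c', InfOften f c' → c' ≤ c

/-- `φ` is an accepting computation of `A` on `t`. -/
def IsAccepting (A : PTA Q Γ) (t : List Bool → Γ) (φ : List Bool → Q) : Prop :=
  IsComputation A t φ ∧
    ∀ d : ℕ → Bool, ParityAccept (fun i => A.color (φ (branchNode d i)))

/-- The set of accepting computations of `A` on `t`. -/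
def ACC (A : PTA Q Γ) (t : List Bool → Γ) : Set (List Bool → Q) :=
  {φ | IsAccepting A t φ}

/-- The language of `A`. -/
def Lang (A : PTA Q Γ) : Set (List Bool → Γ) := {t | (ACC A t).Nonempty}

/-- `A_q`: the automaton `A` with initial-state set `{q}`. -/
def restart (A : PTA Q Γ) (q : Q) : PTA Q Γ := { A with init := {q} }

/-- Grafting `t1` at node `v` in `t`. -/
def graft {α : Type*} (t t1 : List Bool → α) (v : List Bool) : List Bool → α :=
  fun u => if v <+: u then t1 (u.drop v.length) else t u

open Classical

/-- Grafting a tree `g` at every node of a set `S` (intended for antichains):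
below a node of `S` the labels come from `g`, elsewhere from `f`. -/
noncomputable def graftMany {α : Type*} (S : Set (List Bool)) (f g : List Bool → α) :
    List Bool → α :=
  fun u => if h : ∃ v, v ∈ S ∧ v <+: u then g (u.drop (Classical.choose h).length)
           else f u

universe u

/-! ### Auxiliary lemmas -/

/-- `S` is an antichain with respect to the prefix order. -/
def IsAnti (S : Set (List Bool)) : Prop :=
  ∀ u ∈ S, ∀ v ∈ S, u ≠ v → ¬ u <+: v ∧ ¬ v <+: u

lemma IsAnti.mono {S T : Set (List Bool)} (h : IsAnti T) (hs : S ⊆ T) : IsAnti S :=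
  fun u hu v hv => h u (hs hu) v (hs hv)

lemma prefix_snoc {α : Type*} {l1 l2 : List α} {b : α} (h : l1 <+: l2 ++ [b]) :
    l1 <+: l2 ∨ l1 = l2 ++ [b] := by
  have hl := h.length_le
  simp only [List.length_append, List.length_singleton] at hl
  rcases lt_or_eq_of_le hl with h' | h'
  · exact Or.inl (List.prefix_of_prefix_length_le h (List.prefix_append l2 [b]) (by omega))
  · exact Or.inr (h.eq_of_length (by simp [h']))

lemma branchNode_length (d : ℕ → Bool) (i : ℕ) : (branchNode d i).length = i := by
  simp [branchNode]

lemma branchNode_succ (d : ℕ → Bool) (i : ℕ) :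
    branchNode d (i + 1) = branchNode d i ++ [d i] := by
  rw [branchNode, List.ofFn_succ']
  simp [branchNode, List.concat_eq_append]

lemma branchNode_prefix (d : ℕ → Bool) {i j : ℕ} (h : i ≤ j) :
    branchNode d i <+: branchNode d j := by
  induction j with
  | zero => simp_all [branchNode]
  | succ j ih =>
    rcases Nat.eq_or_lt_of_le h with h' | h'
    · subst h'; exact List.prefix_refl _
    · exact (ih (by omega)).trans (by rw [branchNode_succ]; exact List.prefix_append _ _)

lemma branchNode_drop (d : ℕ → Bool) (n k : ℕ) :
    (branchNode d (n + k)).drop n = branchNode (fun j => d (n + j)) k := by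
  induction k with
  | zero => simp [branchNode, List.drop_eq_nil_of_le]
  | succ k ih =>
    have h : n + (k + 1) = (n + k) + 1 := by omega
    rw [h, branchNode_succ, List.drop_append_of_le_length (by simp [branchNode_length]), ih,
      branchNode_succ (fun j => d (n + j)) k]

lemma graftMany_of_not {α : Type*} {S : Set (List Bool)} {f g : List Bool → α}
    {u : List Bool} (h : ¬ ∃ v, v ∈ S ∧ v <+: u) : graftMany S f g u = f u := by
  simp only [graftMany]
  rw [dif_neg h]

lemma graftMany_of_prefix {α : Type*} {S : Set (List Bool)} (hS : IsAnti S)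
    {f g : List Bool → α} {v u : List Bool} (hv : v ∈ S) (hvu : v <+: u) :
    graftMany S f g u = g (u.drop v.length) := by
  have h : ∃ w, w ∈ S ∧ w <+: u := ⟨v, hv, hvu⟩
  simp only [graftMany]
  rw [dif_pos h]
  obtain ⟨hw, hwu⟩ := Classical.choose_spec h
  rcases eq_or_ne (Classical.choose h) v with he | he
  · rw [he]
  · rcases List.prefix_or_prefix_of_prefix hwu hvu with h' | h'
    · exact absurd h' (hS _ hw _ hv he).1
    · exact absurd h' (hS _ hv _ hw he.symm).1

lemma infOften_shift {f g : ℕ → ℕ} {n : ℕ} (h : ∀ i, g (i + n) = f i) (c : ℕ) :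
    InfOften g c ↔ InfOften f c := by
  constructor
  · intro hg N
    obtain ⟨i, hi, he⟩ := hg (N + n)
    refine ⟨i - n, by omega, ?_⟩
    have h2 := h (i - n)
    rw [show i - n + n = i by omega] at h2
    omega
  · intro hf N
    obtain ⟨i, hi, he⟩ := hf N
    exact ⟨i + n, by omega, by rw [h]; exact he⟩

lemma ParityAccept.shift {f g : ℕ → ℕ} {n : ℕ} (h : ∀ i, g (i + n) = f i)
    (hf : ParityAccept f) : ParityAccept g := by
  obtain ⟨c, hc, hio, hmax⟩ := hf
  exact ⟨c, hc, (infOften_shift h c).2 hio, fun c' hc' => hmax c' ((infOften_shift h c').1 hc')⟩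

section Aux

variable {Q : Type u} {Γ : Type*} {A : PTA Q Γ} {t : List Bool → Γ} {φ : List Bool → Q}
  {Ahat : Set (List Bool)} {q : Q} {tamb : List Bool → Γ} {φ1 φ2 : List Bool → Q}

/-- Key evaluation: if `w ∈ Ahat` but `w ∉ A'`, then below `w` the double graft follows `φ1`. -/
lemma graft2_eval_out (hanti : IsAnti Ahat) {A' : Set (List Bool)} (hsub : A' ⊆ Ahat)
    {w : List Bool} (hw : w ∈ Ahat) (hwA : w ∉ A') {u : List Bool} (hwu : w <+: u) :
    graftMany A' (graftMany Ahat φ φ1) φ2 u = φ1 (u.drop w.length) := by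
  have hno : ¬ ∃ w', w' ∈ A' ∧ w' <+: u := by
    rintro ⟨w', hw', hw'u⟩
    rcases eq_or_ne w' w with rfl | hne
    · exact hwA hw'
    · rcases List.prefix_or_prefix_of_prefix hw'u hwu with h' | h'
      · exact (hanti w' (hsub hw') w hw hne).1 h'
      · exact (hanti w hw w' (hsub hw') hne.symm).1 h'
  rw [graftMany_of_not hno, graftMany_of_prefix hanti hw hwu]

lemma graft2_eval_none (_hanti : IsAnti Ahat) {A' : Set (List Bool)} (hsub : A' ⊆ Ahat)
    {u : List Bool} (h : ¬ ∃ w, w ∈ Ahat ∧ w <+: u) :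
    graftMany A' (graftMany Ahat φ φ1) φ2 u = φ u := by
  have hno : ¬ ∃ w', w' ∈ A' ∧ w' <+: u := fun ⟨w', hw', hp⟩ => h ⟨w', hsub hw', hp⟩
  rw [graftMany_of_not hno, graftMany_of_not h]

lemma ambig_accept (hφ : φ ∈ ACC A t) (hanti : IsAnti Ahat) (hnil : ([] : List Bool) ∉ Ahat)
    (hq : ∀ u ∈ Ahat, φ u = q)
    (h1 : φ1 ∈ ACC (restart A q) tamb) (h2 : φ2 ∈ ACC (restart A q) tamb)
    {A' : Set (List Bool)} (hsub : A' ⊆ Ahat) :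
    graftMany A' (graftMany Ahat φ φ1) φ2 ∈ ACC A (graftMany Ahat t tamb) := by
  obtain ⟨⟨hφinit, hφtr⟩, hφacc⟩ := hφ
  obtain ⟨⟨h1init, h1tr⟩, h1acc⟩ := h1
  obtain ⟨⟨h2init, h2tr⟩, h2acc⟩ := h2
  have hq1 : φ1 [] = q := h1init
  have hq2 : φ2 [] = q := h2init
  have hA' : IsAnti A' := hanti.mono hsub
  set ψ := graftMany A' (graftMany Ahat φ φ1) φ2 with hψ
  have evalA' : ∀ w ∈ A', ∀ u, w <+: u → ψ u = φ2 (u.drop w.length) :=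
    fun w hw u hwu => graftMany_of_prefix hA' hw hwu
  have evalB : ∀ w ∈ Ahat, w ∉ A' → ∀ u, w <+: u → ψ u = φ1 (u.drop w.length) :=
    fun w hw hwA u hwu => graft2_eval_out hanti hsub hw hwA hwu
  have evalC : ∀ u, (¬ ∃ w, w ∈ Ahat ∧ w <+: u) → ψ u = φ u :=
    fun u h => graft2_eval_none hanti hsub h
  have hnilpre : ∀ u : List Bool, u = [] → ¬ ∃ w, w ∈ Ahat ∧ w <+: u := by
    rintro u rfl ⟨w, hw, hwp⟩
    rw [List.prefix_nil.mp hwp] at hw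
    exact hnil hw
  constructor
  · constructor
    · rw [evalC [] (hnilpre [] rfl)]
      exact hφinit
    · intro v
      by_cases hA : ∃ w, w ∈ A' ∧ w <+: v
      · obtain ⟨w, hw, hwv⟩ := hA
        obtain ⟨r, rfl⟩ := hwv
        have e0 : ψ (w ++ r) = φ2 r := by
          rw [evalA' w hw _ (List.prefix_append _ _), List.drop_left]
        have eb : ∀ b, ψ (w ++ r ++ [b]) = φ2 (r ++ [b]) := by
          intro b
          rw [List.append_assoc, evalA' w hw _ (List.prefix_append _ _), List.drop_left]
        have et : graftMany Ahat t tamb (w ++ r) = tamb r := by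
          rw [graftMany_of_prefix hanti (hsub hw) (List.prefix_append _ _), List.drop_left]
        rw [e0, eb false, eb true, et]
        exact h2tr r
      · by_cases hB : ∃ w, w ∈ Ahat ∧ w <+: v
        · obtain ⟨w, hw, hwv⟩ := hB
          have hwA : w ∉ A' := fun h => hA ⟨w, h, hwv⟩
          obtain ⟨r, rfl⟩ := hwv
          have e0 : ψ (w ++ r) = φ1 r := by
            rw [evalB w hw hwA _ (List.prefix_append _ _), List.drop_left]
          have eb : ∀ b, ψ (w ++ r ++ [b]) = φ1 (r ++ [b]) := by
            intro b
            rw [List.append_assoc, evalB w hw hwA _ (List.prefix_append _ _), List.drop_left]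
          have et : graftMany Ahat t tamb (w ++ r) = tamb r := by
            rw [graftMany_of_prefix hanti hw (List.prefix_append _ _), List.drop_left]
          rw [e0, eb false, eb true, et]
          exact h1tr r
        · have e0 : ψ v = φ v := evalC v hB
          have et : graftMany Ahat t tamb v = t v := graftMany_of_not hB
          have eb : ∀ b, ψ (v ++ [b]) = φ (v ++ [b]) := by
            intro b
            by_cases hc : ∃ w, w ∈ Ahat ∧ w <+: v ++ [b]
            · obtain ⟨w, hw, hwp⟩ := hc
              rcases prefix_snoc hwp with h' | rfl
              · exact absurd ⟨w, hw, h'⟩ hB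
              · have hd : (v ++ [b]).drop (v ++ [b]).length = [] := List.drop_length
                have hφq : φ (v ++ [b]) = q := hq _ hw
                by_cases hA2 : (v ++ [b]) ∈ A'
                · rw [evalA' _ hA2 _ (List.prefix_refl _), hd, hq2, hφq]
                · rw [evalB _ hw hA2 _ (List.prefix_refl _), hd, hq1, hφq]
            · exact evalC _ hc
          rw [e0, eb false, eb true, et]
          exact hφtr v
  · intro d
    by_cases hd : ∃ n, ∃ w, w ∈ Ahat ∧ w <+: branchNode d n
    · set n := Nat.find hd with hn
      obtain ⟨w, hw, hwn⟩ := Nat.find_spec hd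
      have hlen : w.length ≤ n := by
        have := hwn.length_le
        rwa [branchNode_length] at this
      have hwb : w = branchNode d w.length := by
        refine List.IsPrefix.eq_of_length ?_ (by rw [branchNode_length])
        exact List.prefix_of_prefix_length_le hwn (branchNode_prefix d hlen)
          (by rw [branchNode_length])
      have hmin : n ≤ w.length :=
        Nat.find_min' hd ⟨w, hw, hwb ▸ List.prefix_refl _⟩
      have hwl : w.length = n := le_antisymm hlen hmin
      have hwn' : w = branchNode d n := by rw [hwb, hwl]
      have hpre : ∀ i, n ≤ i → w <+: branchNode d i := fun i hi =>
        hwn' ▸ branchNode_prefix d hi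
      have hdrop : ∀ k, (branchNode d (k + n)).drop w.length
          = branchNode (fun j => d (n + j)) k := by
        intro k
        rw [hwl, Nat.add_comm k n]
        exact branchNode_drop d n k
      by_cases hwA : w ∈ A'
      · refine ParityAccept.shift (n := n)
          (f := fun k => A.color (φ2 (branchNode (fun j => d (n + j)) k))) ?_ (h2acc _)
        intro i
        show A.color (ψ (branchNode d (i + n))) = _
        rw [evalA' w hwA _ (hpre (i + n) (by omega)), hdrop i]
      · refine ParityAccept.shift (n := n)
          (f := fun k => A.color (φ1 (branchNode (fun j => d (n + j)) k))) ?_ (h1acc _)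
        intro i
        show A.color (ψ (branchNode d (i + n))) = _
        rw [evalB w hw hwA _ (hpre (i + n) (by omega)), hdrop i]
    · push_neg at hd
      have hval : ∀ i, ψ (branchNode d i) = φ (branchNode d i) := by
        intro i
        refine evalC _ ?_
        rintro ⟨w, hw, hp⟩
        exact hd i w hw hp
      simp only [hval]
      exact hφacc d

lemma ambig_ne (hanti : IsAnti Ahat) (hne : φ1 ≠ φ2)
    {B1 B2 : Set (List Bool)} (hB1 : B1 ⊆ Ahat) (hB2 : B2 ⊆ Ahat)
    {w : List Bool} (hw1 : w ∈ B1) (hw2 : w ∉ B2) :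
    graftMany B1 (graftMany Ahat φ φ1) φ2 ≠ graftMany B2 (graftMany Ahat φ φ1) φ2 := by
  intro heq
  obtain ⟨u, hu⟩ : ∃ u, φ1 u ≠ φ2 u := Function.ne_iff.mp hne
  have e1 : graftMany B1 (graftMany Ahat φ φ1) φ2 (w ++ u) = φ2 u := by
    rw [graftMany_of_prefix (hanti.mono hB1) hw1 (List.prefix_append _ _), List.drop_left]
  have e2 : graftMany B2 (graftMany Ahat φ φ1) φ2 (w ++ u) = φ1 u := by
    rw [graft2_eval_out hanti hB2 (hB1 hw1) hw2 (List.prefix_append _ _), List.drop_left]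
  exact hu (by rw [← e2, ← heq, e1])

end Aux

theorem uncountable_ambiguity {Q : Type u} {Γ : Type*} (A : PTA Q Γ)
    (t : List Bool → Γ) (φ : List Bool → Q) (hφ : φ ∈ ACC A t)
    (Ahat : Set (List Bool)) (hinf : Ahat.Infinite)
    (hanti : ∀ u ∈ Ahat, ∀ v ∈ Ahat, u ≠ v → ¬ u <+: v ∧ ¬ v <+: u)
    (q : Q) (hq : ∀ u ∈ Ahat, φ u = q)
    (tamb : List Bool → Γ) (φ1 φ2 : List Bool → Q) (hne : φ1 ≠ φ2)
    (h1 : φ1 ∈ ACC (restart A q) tamb) (h2 : φ2 ∈ ACC (restart A q) tamb) :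
    (∀ A' ⊆ Ahat, graftMany A' (graftMany Ahat φ φ1) φ2 ∈ ACC A (graftMany Ahat t tamb)) ∧
    (∀ A1 ⊆ Ahat, ∀ A2 ⊆ Ahat, A1 ≠ A2 →
        graftMany A1 (graftMany Ahat φ φ1) φ2 ≠ graftMany A2 (graftMany Ahat φ φ1) φ2) ∧
    Cardinal.continuum ≤ Cardinal.mk (ACC A (graftMany Ahat t tamb)) := by
  have hanti' : IsAnti Ahat := hanti
  have hnil : ([] : List Bool) ∉ Ahat := by
    intro h0
    obtain ⟨v, hv⟩ := (hinf.diff (Set.finite_singleton ([] : List Bool))).nonempty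
    have hne' : ([] : List Bool) ≠ v := fun he => hv.2 (by simp [← he])
    exact (hanti [] h0 v hv.1 hne').1 List.nil_prefix
  have part1 : ∀ A' ⊆ Ahat,
      graftMany A' (graftMany Ahat φ φ1) φ2 ∈ ACC A (graftMany Ahat t tamb) :=
    fun A' hsub => ambig_accept hφ hanti' hnil hq h1 h2 hsub
  have part2 : ∀ A1 ⊆ Ahat, ∀ A2 ⊆ Ahat, A1 ≠ A2 →
      graftMany A1 (graftMany Ahat φ φ1) φ2 ≠ graftMany A2 (graftMany Ahat φ φ1) φ2 := by
    intro A1 hs1 A2 hs2 hne12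
    have h : ¬ A1 ⊆ A2 ∨ ¬ A2 ⊆ A1 := by
      by_contra h
      push_neg at h
      exact hne12 (Set.Subset.antisymm h.1 h.2)
    rcases h with h | h
    · obtain ⟨w, hw1, hw2⟩ := Set.not_subset.mp h
      exact ambig_ne hanti' hne hs1 hs2 hw1 hw2
    · obtain ⟨w, hw1, hw2⟩ := Set.not_subset.mp h
      exact (ambig_ne hanti' hne hs2 hs1 hw1 hw2).symm
  refine ⟨part1, part2, ?_⟩
  set e := Set.Infinite.natEmbedding Ahat hinf with he
  have hfinj : Function.Injective (fun k : ℕ => (e k : List Bool)) :=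
    fun a b hab => e.injective (Subtype.ext hab)
  set F : Set ℕ → (List Bool → Q) :=
    fun S => graftMany ((fun k : ℕ => (e k : List Bool)) '' S) (graftMany Ahat φ φ1) φ2 with hF
  have hsubS : ∀ S : Set ℕ, (fun k : ℕ => (e k : List Bool)) '' S ⊆ Ahat := by
    rintro S _ ⟨k, _, rfl⟩
    exact (e k).2
  have hFinj : Function.Injective F := by
    intro S1 S2 h12
    by_contra hne'
    exact part2 _ (hsubS S1) _ (hsubS S2)
      (fun hi => hne' (Set.image_injective.mpr hfinj hi)) h12
  have hG : Function.Injective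
      (fun S : ULift.{u} (Set ℕ) =>
        (⟨F S.down, part1 _ (hsubS S.down)⟩ : ACC A (graftMany Ahat t tamb))) := by
    intro S1 S2 h12
    exact ULift.ext _ _ (hFinj (congrArg Subtype.val h12))
  have hle := Cardinal.mk_le_of_injective hG
  rwa [Cardinal.mk_uLift, Cardinal.mk_set, Cardinal.mk_nat, Cardinal.two_power_aleph0,
    Cardinal.lift_continuum] at hle
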